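/- Let ψ, ζ, ξ, χ : ℝ^{1+3} → ℝ be smooth and let Z be any one of the Lorentz vector fields ∂_μ (0 ≤ μ ≤ 3), Ω_{0k} = t∂_k + x_k∂_t, Ω_{ij} = x_i∂_j − x_j∂_i, or S = t∂_t + Σ_i x_i∂_i. Writing Q^{αβ}(ψ,ζ)Q_{αβ}(ξ,χ) := Σ_{α,β=0}^3 Q^{αβ}(ψ,ζ)·Q_{αβ}(ξ,χ), one has Z[Q^{αβ}(ψ,ζ)Q_{αβ}(ξ,χ)] = Q^{αβ}(Zψ,ζ)Q_{αβ}(ξ,χ) + Q^{αβ}(ψ,Zζ)Q_{αβ}(ξ,χ) + Q^{αβ}(ψ,ζ)Q_{αβ}(Zξ,χ) + Q^{αβ}(ψ,ζ)Q_{αβ}(ξ,Zχ) + c·Q^{αβ}(ψ,ζ)Q_{αβ}(ξ,χ), where c = −4 if Z = S and c = 0 for all the other fields. -/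

import Mathlib

noncomputable section

open Real MeasureTheory

/-- Spacetime point in `ℝ^{1+3}`: coordinate `0` is the time `t`,
coordinates `i.succ` (for `i : Fin 3`) are the spatial coordinates `x_i`. -/
abbrev Pt := Fin 4 → ℝ

/-- A point of the initial slice `{t = 1} ≅ ℝ³`. -/
abbrev Sp := Fin 3 → ℝ

/-- The spacetime point with time `t` and space part `x`. -/
def mkPt (t : ℝ) (x : Sp) : Pt := Fin.cons t x

/-- Coordinate partial derivative `∂_μ`. -/
def pd (μ : Fin 4) (f : Pt → ℝ) : Pt → ℝ := fun p => fderiv ℝ f p (Pi.single μ 1)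

/-- Radial coordinate `r = |x|`. -/
def rr (p : Pt) : ℝ := Real.sqrt (∑ i : Fin 3, (p i.succ) ^ 2)

/-- `ω_i = x_i / r`. -/
def om (i : Fin 3) (p : Pt) : ℝ := p i.succ / rr p

/-- Radial derivative `∂_r = Σ_i ω_i ∂_i`. -/
def pdr (f : Pt → ℝ) : Pt → ℝ := fun p => ∑ i : Fin 3, om i p * pd i.succ f p

/-- Outgoing null derivative `L = ∂_t + ∂_r`. -/
def Lop (f : Pt → ℝ) : Pt → ℝ := fun p => pd 0 f p + pdr f p

/-- Incoming null derivative `L̲ = ∂_t - ∂_r`. -/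
def Lbop (f : Pt → ℝ) : Pt → ℝ := fun p => pd 0 f p - pdr f p

/-- Angular ("good") derivative `∂̄_i = ∂_i - ω_i ∂_r`. -/
def pbar (i : Fin 3) (f : Pt → ℝ) : Pt → ℝ := fun p => pd i.succ f p - om i p * pdr f p

/-- Null coordinate `u = (t - r)/2`. -/
def uuf (p : Pt) : ℝ := (p 0 - rr p) / 2

/-- Null coordinate `ū = (t + r)/2`. -/
def ubf (p : Pt) : ℝ := (p 0 + rr p) / 2

/-- `r = |x|` on the initial slice. -/
def rr3 (x : Sp) : ℝ := Real.sqrt (∑ i : Fin 3, (x i) ^ 2)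

/-- Minkowski signature sign `η^{μμ}` (`-1` for time, `+1` for space). -/
def eta : Fin 4 → ℝ := fun μ => if μ = 0 then -1 else 1

/-- Null form `Q(ξ,χ) = -∂_tξ ∂_tχ + Σ_i ∂_iξ ∂_iχ`. -/
def nullQ (ξ χ : Pt → ℝ) : Pt → ℝ :=
  fun p => -(pd 0 ξ p * pd 0 χ p) + ∑ i : Fin 3, pd i.succ ξ p * pd i.succ χ p

/-- Null form `Q_{αβ}(ξ,χ) = ∂_αξ ∂_βχ - ∂_βξ ∂_αχ`. -/
def Qdn (α β : Fin 4) (ξ χ : Pt → ℝ) : Pt → ℝ :=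
  fun p => pd α ξ p * pd β χ p - pd β ξ p * pd α χ p

/-- Raised-index null form `Q^{αβ}(ξ,χ) = ∂^αξ ∂^βχ - ∂^βξ ∂^αχ`. -/
def Qup (α β : Fin 4) (ξ χ : Pt → ℝ) : Pt → ℝ :=
  fun p => eta α * eta β * Qdn α β ξ χ p

/-- Double null form `Q^{αβ}(ψ, Q_{αβ}(ξ,χ))`, summed over `α, β`. -/
def dnull (ψ ξ χ : Pt → ℝ) : Pt → ℝ :=
  fun p => ∑ α : Fin 4, ∑ β : Fin 4,
    (eta α * pd α ψ p * (eta β * pd β (Qdn α β ξ χ) p)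
      - eta β * pd β ψ p * (eta α * pd α (Qdn α β ξ χ) p))

/-- Quadratic contraction `Q^{αβ}(ψ,ζ) · Q_{αβ}(ξ,χ)`, summed over `α, β`. -/
def QQgen (ψ ζ ξ χ : Pt → ℝ) : Pt → ℝ :=
  fun p => ∑ α : Fin 4, ∑ β : Fin 4, Qup α β ψ ζ p * Qdn α β ξ χ p

/-- Contraction `Q^{αβ}(θ,φ) Q_{αβ}(θ,φ)`. -/
def QQc (θ φ : Pt → ℝ) : Pt → ℝ := QQgen θ φ θ φ
/-- Lorentz boost `Ω_{0i} = t ∂_i + x_i ∂_t`. -/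
def boostOp (i : Fin 3) (f : Pt → ℝ) : Pt → ℝ :=
  fun p => p 0 * pd i.succ f p + p i.succ * pd 0 f p

/-- Rotation `Ω_{ij} = x_i ∂_j - x_j ∂_i`. -/
def rotOp (i j : Fin 3) (f : Pt → ℝ) : Pt → ℝ :=
  fun p => p i.succ * pd j.succ f p - p j.succ * pd i.succ f p

/-- Scaling field `S = t ∂_t + Σ_i x_i ∂_i`. -/
def scalOp (f : Pt → ℝ) : Pt → ℝ :=
  fun p => p 0 * pd 0 f p + ∑ i : Fin 3, p i.succ * pd i.succ f p

section Helpers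

variable {f g : Pt → ℝ}

lemma contDiff_pd (hf : ContDiff ℝ (⊤:ℕ∞) f) (μ : Fin 4) :
    ContDiff ℝ (⊤:ℕ∞) (pd μ f) :=
  ((contDiff_infty_iff_fderiv.mp hf).2.clm_apply contDiff_const)

lemma diffAt (hf : ContDiff ℝ (⊤:ℕ∞) f) (p : Pt) : DifferentiableAt ℝ f p :=
  (hf.differentiable (by simp)).differentiableAt

lemma pd_mul {p : Pt} (hf : DifferentiableAt ℝ f p)
    (hg : DifferentiableAt ℝ g p) (μ : Fin 4) :
    pd μ (fun q => f q * g q) p = pd μ f p * g p + f p * pd μ g p := by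
  simp only [pd, fderiv_fun_mul hf hg, ContinuousLinearMap.add_apply,
    ContinuousLinearMap.smul_apply, smul_eq_mul]
  ring

lemma pd_sub {p : Pt} (hf : DifferentiableAt ℝ f p)
    (hg : DifferentiableAt ℝ g p) (μ : Fin 4) :
    pd μ (fun q => f q - g q) p = pd μ f p - pd μ g p := by
  simp only [pd, fderiv_fun_sub hf hg, ContinuousLinearMap.sub_apply]

lemma pd_add {p : Pt} (hf : DifferentiableAt ℝ f p)
    (hg : DifferentiableAt ℝ g p) (μ : Fin 4) :
    pd μ (fun q => f q + g q) p = pd μ f p + pd μ g p := by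
  simp only [pd, fderiv_fun_add hf hg, ContinuousLinearMap.add_apply]

lemma pd_sum {n : ℕ} {F : Fin n → Pt → ℝ} {p : Pt}
    (h : ∀ i, DifferentiableAt ℝ (F i) p) (μ : Fin 4) :
    pd μ (fun q => ∑ i, F i q) p = ∑ i, pd μ (F i) p := by
  simp only [pd]
  rw [fderiv_fun_sum (fun i _ => h i)]
  simp

lemma pd_coord (ν : Fin 4) (μ : Fin 4) (p : Pt) :
    pd μ (fun q : Pt => q ν) p = if ν = μ then 1 else 0 := by
  have : fderiv ℝ (fun q : Pt => q ν) p = ContinuousLinearMap.proj ν :=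
    (ContinuousLinearMap.proj ν : Pt →L[ℝ] ℝ).fderiv
  simp [pd, this, Pi.single_apply]

lemma pd_swap (hf : ContDiff ℝ (⊤:ℕ∞) f) (a b : Fin 4) (p : Pt) :
    pd a (pd b f) p = pd b (pd a f) p := by
  have hsymm : IsSymmSndFDerivAt ℝ f p := by
    apply ContDiffAt.isSymmSndFDerivAt hf.contDiffAt
    rw [show ((⊤:ℕ∞) : WithTop ℕ∞) = (⊤:ℕ∞) from rfl]
    rw [minSmoothness_of_isRCLikeNormedField]
    exact WithTop.coe_le_coe.mpr (le_top : (2:ℕ∞) ≤ ⊤)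
  have key : ∀ v w : Pt, fderiv ℝ (fderiv ℝ f) p v w = fderiv ℝ (fderiv ℝ f) p w v := hsymm
  have hfd : Differentiable ℝ (fderiv ℝ f) :=
    (contDiff_infty_iff_fderiv.mp hf).2.differentiable (by simp)
  have expand : ∀ a b : Fin 4,
      pd a (pd b f) p = fderiv ℝ (fderiv ℝ f) p (Pi.single a 1) (Pi.single b 1) := by
    intro a b
    have : pd b f = fun q => (fderiv ℝ f q) (Pi.single b 1) := rfl
    rw [pd, this, fderiv_clm_apply (hfd p) (differentiableAt_const _)]
    simp
  rw [expand, expand, key]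

lemma contDiff_Qdn (hf : ContDiff ℝ (⊤:ℕ∞) f) (hg : ContDiff ℝ (⊤:ℕ∞) g)
    (α β : Fin 4) : ContDiff ℝ (⊤:ℕ∞) (Qdn α β f g) :=
  (((contDiff_pd hf α).mul (contDiff_pd hg β)).sub ((contDiff_pd hf β).mul (contDiff_pd hg α)))

lemma pd_Qdn (hf : ContDiff ℝ (⊤:ℕ∞) f) (hg : ContDiff ℝ (⊤:ℕ∞) g)
    (ν α β : Fin 4) (p : Pt) :
    pd ν (Qdn α β f g) p
      = pd ν (pd α f) p * pd β g p + pd α f p * pd ν (pd β g) p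
        - pd ν (pd β f) p * pd α g p - pd β f p * pd ν (pd α g) p := by
  have h1 : pd ν (Qdn α β f g) p
      = pd ν (fun q => pd α f q * pd β g q) p - pd ν (fun q => pd β f q * pd α g q) p :=
    pd_sub ((diffAt (contDiff_pd hf α) p).mul (diffAt (contDiff_pd hg β) p))
      ((diffAt (contDiff_pd hf β) p).mul (diffAt (contDiff_pd hg α) p)) ν
  rw [h1, pd_mul (diffAt (contDiff_pd hf α) p) (diffAt (contDiff_pd hg β) p),
    pd_mul (diffAt (contDiff_pd hf β) p) (diffAt (contDiff_pd hg α) p)]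
  ring

lemma pd_QQgen {ψ ζ ξ χ : Pt → ℝ} (hψ : ContDiff ℝ (⊤:ℕ∞) ψ) (hζ : ContDiff ℝ (⊤:ℕ∞) ζ)
    (hξ : ContDiff ℝ (⊤:ℕ∞) ξ) (hχ : ContDiff ℝ (⊤:ℕ∞) χ) (ν : Fin 4) (p : Pt) :
    pd ν (QQgen ψ ζ ξ χ) p
      = ∑ α : Fin 4, ∑ β : Fin 4, eta α * eta β *
          ((pd ν (pd α ψ) p * pd β ζ p + pd α ψ p * pd ν (pd β ζ) p
              - pd ν (pd β ψ) p * pd α ζ p - pd β ψ p * pd ν (pd α ζ) p) * Qdn α β ξ χ p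
            + Qdn α β ψ ζ p *
              (pd ν (pd α ξ) p * pd β χ p + pd α ξ p * pd ν (pd β χ) p
                - pd ν (pd β ξ) p * pd α χ p - pd β ξ p * pd ν (pd α χ) p)) := by
  have hsummand : ∀ α β : Fin 4, ContDiff ℝ (⊤:ℕ∞)
      (fun q => Qup α β ψ ζ q * Qdn α β ξ χ q) := fun α β =>
    ((contDiff_const.mul (contDiff_Qdn hψ hζ α β)).mul (contDiff_Qdn hξ hχ α β))
  have hinner : ∀ α : Fin 4, ContDiff ℝ (⊤:ℕ∞)
      (fun q => ∑ β : Fin 4, Qup α β ψ ζ q * Qdn α β ξ χ q) := fun α =>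
    ContDiff.sum (fun β _ => hsummand α β)
  have h1 : pd ν (QQgen ψ ζ ξ χ) p
      = ∑ α : Fin 4, pd ν (fun q => ∑ β : Fin 4, Qup α β ψ ζ q * Qdn α β ξ χ q) p :=
    pd_sum (fun α => diffAt (hinner α) p) ν
  rw [h1]
  refine Finset.sum_congr rfl (fun α _ => ?_)
  rw [pd_sum (fun β => diffAt (hsummand α β) p) ν]
  refine Finset.sum_congr rfl (fun β _ => ?_)
  have h2 : pd ν (fun q => Qup α β ψ ζ q * Qdn α β ξ χ q) p
      = pd ν (Qup α β ψ ζ) p * Qdn α β ξ χ p + Qup α β ψ ζ p * pd ν (Qdn α β ξ χ) p :=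
    pd_mul (diffAt (contDiff_const.mul (contDiff_Qdn hψ hζ α β) :
        ContDiff ℝ (⊤:ℕ∞) (Qup α β ψ ζ)) p)
      (diffAt (contDiff_Qdn hξ hχ α β) p) ν
  have h3 : pd ν (Qup α β ψ ζ) p = eta α * eta β * pd ν (Qdn α β ψ ζ) p := by
    have he : Qup α β ψ ζ = fun q => eta α * eta β * Qdn α β ψ ζ q := rfl
    rw [he]
    have hm := pd_mul (p := p) (differentiableAt_const (eta α * eta β))
      (diffAt (contDiff_Qdn hψ hζ α β) p) ν
    rw [hm]
    have hc : pd ν (fun _ => eta α * eta β) p = 0 := by simp [pd]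
    rw [hc]; ring
  rw [h2, h3, pd_Qdn hψ hζ ν α β p, pd_Qdn hξ hχ ν α β p]
  simp only [Qup]
  ring

lemma diff_coord_mul (hg : ContDiff ℝ (⊤:ℕ∞) g) (ν : Fin 4) (p : Pt) :
    DifferentiableAt ℝ (fun q : Pt => q ν * g q) p :=
  ((ContinuousLinearMap.proj ν : Pt →L[ℝ] ℝ).differentiableAt).mul (diffAt hg p)

lemma pd_coord_mul {p : Pt} (hg : ContDiff ℝ (⊤:ℕ∞) g) (ν μ : Fin 4) :
    pd μ (fun q => q ν * g q) p
      = (if ν = μ then 1 else 0) * g p + p ν * pd μ g p := by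
  rw [pd_mul (by exact (ContinuousLinearMap.proj ν : Pt →L[ℝ] ℝ).differentiableAt)
    (diffAt hg p) μ, pd_coord]

lemma pd_boost (hf : ContDiff ℝ (⊤:ℕ∞) f) (k : Fin 3) (α : Fin 4) (p : Pt) :
    pd α (boostOp k f) p
      = boostOp k (pd α f) p + (if (0:Fin 4) = α then 1 else 0) * pd k.succ f p
        + (if k.succ = α then 1 else 0) * pd 0 f p := by
  have h1 : pd α (boostOp k f) p
      = pd α (fun q => q 0 * pd k.succ f q) p + pd α (fun q => q k.succ * pd 0 f q) p :=
    pd_add (diff_coord_mul (contDiff_pd hf k.succ) 0 p) (diff_coord_mul (contDiff_pd hf 0) k.succ p) α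
  rw [h1, pd_coord_mul (contDiff_pd hf k.succ) 0 α, pd_coord_mul (contDiff_pd hf 0) k.succ α,
    pd_swap hf α k.succ, pd_swap hf α 0]
  simp only [boostOp]
  ring

lemma pd_rot (hf : ContDiff ℝ (⊤:ℕ∞) f) (i j : Fin 3) (α : Fin 4) (p : Pt) :
    pd α (rotOp i j f) p
      = rotOp i j (pd α f) p + (if i.succ = α then 1 else 0) * pd j.succ f p
        - (if j.succ = α then 1 else 0) * pd i.succ f p := by
  have h1 : pd α (rotOp i j f) p
      = pd α (fun q => q i.succ * pd j.succ f q) p - pd α (fun q => q j.succ * pd i.succ f q) p :=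
    pd_sub (diff_coord_mul (contDiff_pd hf j.succ) i.succ p)
      (diff_coord_mul (contDiff_pd hf i.succ) j.succ p) α
  rw [h1, pd_coord_mul (contDiff_pd hf j.succ) i.succ α,
    pd_coord_mul (contDiff_pd hf i.succ) j.succ α,
    pd_swap hf α i.succ, pd_swap hf α j.succ]
  simp only [rotOp]
  ring

lemma pd_scal (hf : ContDiff ℝ (⊤:ℕ∞) f) (α : Fin 4) (p : Pt) :
    pd α (scalOp f) p = scalOp (pd α f) p + pd α f p := by
  have h1 : pd α (scalOp f) p
      = pd α (fun q => q 0 * pd 0 f q) p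
        + ∑ i : Fin 3, pd α (fun q => q i.succ * pd i.succ f q) p := by
    have h2 : pd α (scalOp f) p
        = pd α (fun q => q 0 * pd 0 f q) p
          + pd α (fun q => ∑ i : Fin 3, q i.succ * pd i.succ f q) p :=
      pd_add (diff_coord_mul (contDiff_pd hf 0) 0 p) (by exact DifferentiableAt.fun_sum (fun (i : Fin 3) _ => diff_coord_mul (contDiff_pd hf i.succ) i.succ p)) α
    rw [h2, pd_sum (fun i => diff_coord_mul (contDiff_pd hf i.succ) i.succ p) α]
  rw [h1, pd_coord_mul (contDiff_pd hf 0) 0 α, pd_swap hf α 0]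
  have h3 : ∀ i : Fin 3, pd α (fun q => q i.succ * pd i.succ f q) p
      = (if i.succ = α then 1 else 0) * pd i.succ f p + p i.succ * pd i.succ (pd α f) p := by
    intro i
    rw [pd_coord_mul (contDiff_pd hf i.succ) i.succ α, pd_swap hf α i.succ]
  simp only [h3]
  simp only [scalOp, Finset.sum_add_distrib]
  have h4 : ∑ i : Fin 3, (if i.succ = α then 1 else 0) * pd i.succ f p
      + (if (0:Fin 4) = α then 1 else 0) * pd 0 f p = pd α f p := by
    fin_cases α <;> simp [Fin.sum_univ_three] <;> (try rfl) <;> simp [Fin.ext_iff]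
  ring_nf
  ring_nf at h4
  linarith [h4]

/-- boost commutator first-order extra term -/
def eB (k : Fin 3) (α : Fin 4) (f : Pt → ℝ) (p : Pt) : ℝ :=
  (if (0:Fin 4) = α then 1 else 0) * pd k.succ f p + (if k.succ = α then 1 else 0) * pd 0 f p

def extB (k : Fin 3) (ψ ζ ξ χ : Pt → ℝ) (p : Pt) (α β : Fin 4) : ℝ :=
  -(eta α * eta β * ((eB k α ψ p * pd β ζ p + pd α ψ p * eB k β ζ p
      - eB k β ψ p * pd α ζ p - pd β ψ p * eB k α ζ p) * Qdn α β ξ χ p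
    + Qdn α β ψ ζ p * (eB k α ξ p * pd β χ p + pd α ξ p * eB k β χ p
      - eB k β ξ p * pd α χ p - pd β ξ p * eB k α χ p)))

set_option maxHeartbeats 1000000 in
lemma extB_zero' (b : Fin 3) (hb : b = 0 ∨ b = 1 ∨ b = 2) (ψ ζ ξ χ : Pt → ℝ) (p : Pt) :
    ∑ α : Fin 4, ∑ β : Fin 4, extB b ψ ζ ξ χ p α β = 0 := by
  rcases hb with h | h | h <;> subst h <;>
  · simp only [show ((0:Fin 3)).succ = (1:Fin 4) from rfl,
      show ((1:Fin 3)).succ = (2:Fin 4) from rfl,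
      show ((2:Fin 3)).succ = (3:Fin 4) from rfl,
      extB, eB, Qdn, Fin.sum_univ_four,
      show eta 0 = -1 from rfl, show eta 1 = 1 from rfl, show eta 2 = 1 from rfl,
      show eta 3 = 1 from rfl, ↓reduceIte, Fin.reduceEq, mul_zero, zero_mul, mul_one, one_mul,
      add_zero, zero_add]
    ring

lemma extB_zero (k : Fin 3) (ψ ζ ξ χ : Pt → ℝ) (p : Pt) :
    ∑ α : Fin 4, ∑ β : Fin 4, extB k ψ ζ ξ χ p α β = 0 :=
  extB_zero' k (by fin_cases k <;> simp) ψ ζ ξ χ p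

/-- rotation commutator first-order extra term -/
def eR (i j : Fin 3) (α : Fin 4) (f : Pt → ℝ) (p : Pt) : ℝ :=
  (if i.succ = α then 1 else 0) * pd j.succ f p - (if j.succ = α then 1 else 0) * pd i.succ f p

def extR (i j : Fin 3) (ψ ζ ξ χ : Pt → ℝ) (p : Pt) (α β : Fin 4) : ℝ :=
  -(eta α * eta β * ((eR i j α ψ p * pd β ζ p + pd α ψ p * eR i j β ζ p
      - eR i j β ψ p * pd α ζ p - pd β ψ p * eR i j α ζ p) * Qdn α β ξ χ p
    + Qdn α β ψ ζ p * (eR i j α ξ p * pd β χ p + pd α ξ p * eR i j β χ p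
      - eR i j β ξ p * pd α χ p - pd β ξ p * eR i j α χ p)))

set_option maxHeartbeats 2000000 in
lemma extR_zero' (a b : Fin 3) (ha : a = 0 ∨ a = 1 ∨ a = 2) (hb : b = 0 ∨ b = 1 ∨ b = 2)
    (ψ ζ ξ χ : Pt → ℝ) (p : Pt) :
    ∑ α : Fin 4, ∑ β : Fin 4, extR a b ψ ζ ξ χ p α β = 0 := by
  rcases ha with h | h | h <;> subst h <;> rcases hb with h | h | h <;> subst h <;>
  · simp only [show ((0:Fin 3)).succ = (1:Fin 4) from rfl,
      show ((1:Fin 3)).succ = (2:Fin 4) from rfl,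
      show ((2:Fin 3)).succ = (3:Fin 4) from rfl,
      extR, eR, Qdn, Fin.sum_univ_four,
      show eta 0 = -1 from rfl, show eta 1 = 1 from rfl, show eta 2 = 1 from rfl,
      show eta 3 = 1 from rfl, ↓reduceIte, Fin.reduceEq, mul_zero, zero_mul, mul_one, one_mul,
      add_zero, zero_add]
    ring

lemma extR_zero (i j : Fin 3) (ψ ζ ξ χ : Pt → ℝ) (p : Pt) :
    ∑ α : Fin 4, ∑ β : Fin 4, extR i j ψ ζ ξ χ p α β = 0 :=
  extR_zero' i j (by fin_cases i <;> simp) (by fin_cases j <;> simp) ψ ζ ξ χ p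

end Helpers

set_option maxHeartbeats 2000000 in
/-- commutation of the Lorentz vector fields with the product
contraction `Q^{αβ}(ψ,ζ)·Q_{αβ}(ξ,χ)`: the Leibniz rule holds exactly for
`∂_μ`, the boosts and the rotations, and up to `-4` times the contraction for
the scaling field `S`. -/
theorem null_form_contraction_commutes_with_lorentz_fields
    (ψ ζ ξ χ : Pt → ℝ) (hψ : ContDiff ℝ (⊤:ℕ∞) ψ) (hζ : ContDiff ℝ (⊤:ℕ∞) ζ)
    (hξ : ContDiff ℝ (⊤:ℕ∞) ξ) (hχ : ContDiff ℝ (⊤:ℕ∞) χ) :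
    (∀ μ : Fin 4, ∀ p : Pt,
      pd μ (QQgen ψ ζ ξ χ) p
        = QQgen (pd μ ψ) ζ ξ χ p + QQgen ψ (pd μ ζ) ξ χ p
          + QQgen ψ ζ (pd μ ξ) χ p + QQgen ψ ζ ξ (pd μ χ) p) ∧
    (∀ k : Fin 3, ∀ p : Pt,
      boostOp k (QQgen ψ ζ ξ χ) p
        = QQgen (boostOp k ψ) ζ ξ χ p + QQgen ψ (boostOp k ζ) ξ χ p
          + QQgen ψ ζ (boostOp k ξ) χ p + QQgen ψ ζ ξ (boostOp k χ) p) ∧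
    (∀ i j : Fin 3, ∀ p : Pt,
      rotOp i j (QQgen ψ ζ ξ χ) p
        = QQgen (rotOp i j ψ) ζ ξ χ p + QQgen ψ (rotOp i j ζ) ξ χ p
          + QQgen ψ ζ (rotOp i j ξ) χ p + QQgen ψ ζ ξ (rotOp i j χ) p) ∧
    (∀ p : Pt,
      scalOp (QQgen ψ ζ ξ χ) p
        = QQgen (scalOp ψ) ζ ξ χ p + QQgen ψ (scalOp ζ) ξ χ p
          + QQgen ψ ζ (scalOp ξ) χ p + QQgen ψ ζ ξ (scalOp χ) p
          + (-4) * QQgen ψ ζ ξ χ p) := by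
  refine ⟨?_, ?_, ?_, ?_⟩
  · intro μ p
    rw [pd_QQgen hψ hζ hξ hχ μ p]
    simp only [QQgen, Qup, Qdn, ← Finset.sum_add_distrib]
    refine Finset.sum_congr rfl fun α _ => ?_
    refine Finset.sum_congr rfl fun β _ => ?_
    rw [pd_swap hψ α μ p, pd_swap hψ β μ p, pd_swap hζ α μ p, pd_swap hζ β μ p,
      pd_swap hξ α μ p, pd_swap hξ β μ p, pd_swap hχ α μ p, pd_swap hχ β μ p]
    ring
  · intro k p
    rw [show boostOp k (QQgen ψ ζ ξ χ) p
        = p 0 * pd k.succ (QQgen ψ ζ ξ χ) p + p k.succ * pd 0 (QQgen ψ ζ ξ χ) p from rfl,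
      pd_QQgen hψ hζ hξ hχ k.succ p, pd_QQgen hψ hζ hξ hχ 0 p]
    simp only [QQgen, Qup, Qdn, pd_boost hψ k, pd_boost hζ k, pd_boost hξ k, pd_boost hχ k]
    rw [← sub_eq_zero]
    conv_rhs => rw [← extB_zero k ψ ζ ξ χ p]
    simp only [Finset.mul_sum, sub_add_eq_sub_sub, ← Finset.sum_sub_distrib,
      ← Finset.sum_add_distrib]
    refine Finset.sum_congr rfl fun α _ => ?_
    refine Finset.sum_congr rfl fun β _ => ?_
    simp only [boostOp, extB, eB, Qdn]
    ring
  · intro i j p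
    rw [show rotOp i j (QQgen ψ ζ ξ χ) p
        = p i.succ * pd j.succ (QQgen ψ ζ ξ χ) p - p j.succ * pd i.succ (QQgen ψ ζ ξ χ) p from rfl,
      pd_QQgen hψ hζ hξ hχ j.succ p, pd_QQgen hψ hζ hξ hχ i.succ p]
    simp only [QQgen, Qup, Qdn, pd_rot hψ i j, pd_rot hζ i j, pd_rot hξ i j, pd_rot hχ i j]
    rw [← sub_eq_zero]
    conv_rhs => rw [← extR_zero i j ψ ζ ξ χ p]
    simp only [Finset.mul_sum, sub_add_eq_sub_sub, ← Finset.sum_sub_distrib,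
      ← Finset.sum_add_distrib]
    refine Finset.sum_congr rfl fun α _ => ?_
    refine Finset.sum_congr rfl fun β _ => ?_
    simp only [rotOp, extR, eR, Qdn]
    ring
  · intro p
    rw [show scalOp (QQgen ψ ζ ξ χ) p
        = p 0 * pd 0 (QQgen ψ ζ ξ χ) p
          + ∑ i : Fin 3, p i.succ * pd i.succ (QQgen ψ ζ ξ χ) p from rfl,
      Fin.sum_univ_three,
      pd_QQgen hψ hζ hξ hχ 0 p, pd_QQgen hψ hζ hξ hχ ((0:Fin 3).succ) p,
      pd_QQgen hψ hζ hξ hχ ((1:Fin 3).succ) p, pd_QQgen hψ hζ hξ hχ ((2:Fin 3).succ) p]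
    simp only [QQgen, Qup, Qdn, pd_scal hψ, pd_scal hζ, pd_scal hξ, pd_scal hχ]
    rw [← sub_eq_zero]
    simp only [Finset.mul_sum, sub_add_eq_sub_sub, ← Finset.sum_sub_distrib,
      ← Finset.sum_add_distrib]
    refine Finset.sum_eq_zero fun α _ => ?_
    refine Finset.sum_eq_zero fun β _ => ?_
    simp only [scalOp, Fin.sum_univ_three, Qdn]
    ring
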